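/- The curve f(v) = (cosh v, 0, sinh v), v ∈ ℝ, is a unit speed timelike curve on S²₁ (⟪f,f⟫ = 1, ⟪f',f'⟫ = −1) satisfying f(v) ×ₗ f'(v) = (0, −1, 0) and κ_g(v) = 0 for all v; consequently, the associated spacelike Bertrand curve γ(v) = (√2/2)·e·(cos(1)·sinh v, −sin(1)·v, cos(1)·(cosh v − 1)) is spacelike (⟪γ',γ'⟫ = e²/2 > 0) and is a helix: its curvature κ(v) = ‖γ'(v) ×ₗ γ''(v)‖ / ⟪γ'(v),γ'(v)⟫^{3/2} and torsion τ(v) = det(γ'(v), γ''(v), γ'''(v)) / ‖γ'(v) ×ₗ γ''(v)‖² are both nonzero constants. -/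

import Mathlib

noncomputable section

/-- Minkowski inner product ⟪x,y⟫ = x₁y₁ + x₂y₂ − x₃y₃ on ℝ³. -/
def mdot (x y : Fin 3 → ℝ) : ℝ := x 0 * y 0 + x 1 * y 1 - x 2 * y 2

/-- Lorentzian cross product x ×ₗ y. -/
def lcross (x y : Fin 3 → ℝ) : Fin 3 → ℝ :=
  ![x 1 * y 2 - x 2 * y 1, x 2 * y 0 - x 0 * y 2, x 1 * y 0 - x 0 * y 1]

/-- Determinant of the 3×3 matrix with rows x, y, z. -/
def det3 (x y z : Fin 3 → ℝ) : ℝ :=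
  x 0 * (y 1 * z 2 - y 2 * z 1) - x 1 * (y 0 * z 2 - y 2 * z 0) + x 2 * (y 0 * z 1 - y 1 * z 0)

/-- Minkowski norm ‖x‖ = √|⟪x,x⟫|. -/
def mnorm (x : Fin 3 → ℝ) : ℝ := Real.sqrt |mdot x x|

lemma deriv_vec3 (a b c a' b' c' : ℝ → ℝ) (ha : ∀ v, HasDerivAt a (a' v) v)
    (hb : ∀ v, HasDerivAt b (b' v) v) (hc : ∀ v, HasDerivAt c (c' v) v) :
    deriv (fun v => ![a v, b v, c v] : ℝ → Fin 3 → ℝ) = fun v => ![a' v, b' v, c' v] := by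
  funext v
  refine HasDerivAt.deriv ?_
  rw [hasDerivAt_pi]
  intro i
  fin_cases i <;> simp [ha v, hb v, hc v]

/-- Example: f(v) = (cosh v, 0, sinh v) is a unit speed timelike curve on S²₁ with
f ×ₗ f' = (0,−1,0) and κ_g ≡ 0; the associated spacelike Bertrand curve
γ(v) = (√2/2)·e·(cos1·sinh v, −sin1·v, cos1·(cosh v − 1)) is spacelike with
⟪γ',γ'⟫ = e²/2 > 0 and is a helix: its curvature and torsion are nonzero constants. -/
theorem stmt_19 (f γ : ℝ → Fin 3 → ℝ)
    (hfdef : f = fun v => ![Real.cosh v, 0, Real.sinh v])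
    (hγdef : γ = fun v => (Real.sqrt 2 / 2 * Real.exp 1) •
      ![Real.cos 1 * Real.sinh v, -(Real.sin 1) * v, Real.cos 1 * (Real.cosh v - 1)])
    (kg : ℝ → ℝ)
    (hkg : kg = fun w => det3 (f w) (deriv f w) (deriv (deriv f) w))
    (K T : ℝ → ℝ)
    (hK : K = fun v => mnorm (lcross (deriv γ v) (deriv (deriv γ) v))
        / Real.sqrt (mdot (deriv γ v) (deriv γ v)) ^ 3)
    (hT : T = fun v => det3 (deriv γ v) (deriv (deriv γ) v) (deriv (deriv (deriv γ)) v)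
        / mnorm (lcross (deriv γ v) (deriv (deriv γ) v)) ^ 2) :
    (∀ v : ℝ, mdot (f v) (f v) = 1) ∧
    (∀ v : ℝ, mdot (deriv f v) (deriv f v) = -1) ∧
    (∀ v : ℝ, lcross (f v) (deriv f v) = ![0, -1, 0]) ∧
    (∀ v : ℝ, kg v = 0) ∧
    (∀ v : ℝ, mdot (deriv γ v) (deriv γ v) = Real.exp 1 ^ 2 / 2) ∧
    (0 < Real.exp 1 ^ 2 / 2) ∧
    (∃ c₁ : ℝ, c₁ ≠ 0 ∧ ∀ v : ℝ, K v = c₁) ∧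
    (∃ c₂ : ℝ, c₂ ≠ 0 ∧ ∀ v : ℝ, T v = c₂) := by
  have hrpos : 0 < Real.sqrt 2 / 2 * Real.exp 1 := by positivity
  set r : ℝ := Real.sqrt 2 / 2 * Real.exp 1 with hr
  have hr2 : r ^ 2 = Real.exp 1 ^ 2 / 2 := by
    rw [hr, mul_pow, div_pow, Real.sq_sqrt (by norm_num : (0:ℝ) ≤ 2)]
    ring
  have hcos : 0 < Real.cos 1 :=
    Real.cos_pos_of_mem_Ioo (by constructor <;> nlinarith [Real.pi_gt_three])
  have hsin : 0 < Real.sin 1 :=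
    Real.sin_pos_of_pos_of_lt_pi (by norm_num) (by nlinarith [Real.pi_gt_three])
  -- derivatives of f
  have hf1 : deriv f = fun v => ![Real.sinh v, 0, Real.cosh v] := by
    rw [hfdef]
    exact deriv_vec3 _ _ _ _ _ _ (fun v => Real.hasDerivAt_cosh v)
      (fun v => hasDerivAt_const v 0) (fun v => Real.hasDerivAt_sinh v)
  have hf2 : deriv (deriv f) = fun v => ![Real.cosh v, 0, Real.sinh v] := by
    rw [hf1]
    exact deriv_vec3 _ _ _ _ _ _ (fun v => Real.hasDerivAt_sinh v)
      (fun v => hasDerivAt_const v 0) (fun v => Real.hasDerivAt_cosh v)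
  -- rewrite γ without smul
  have hγ' : γ = fun v => ![r * (Real.cos 1 * Real.sinh v), r * (-(Real.sin 1) * v),
      r * (Real.cos 1 * (Real.cosh v - 1))] := by
    rw [hγdef]; funext v; funext i; fin_cases i <;> simp [hr]
  have hg1 : deriv γ = fun v => ![r * (Real.cos 1 * Real.cosh v), r * (-(Real.sin 1)),
      r * (Real.cos 1 * Real.sinh v)] := by
    rw [hγ']
    refine deriv_vec3 _ _ _ _ _ _ (fun v => ?_) (fun v => ?_) (fun v => ?_)
    · exact ((Real.hasDerivAt_sinh v).const_mul (Real.cos 1)).const_mul r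
    · simpa using ((hasDerivAt_id v).const_mul (-(Real.sin 1))).const_mul r
    · exact ((((Real.hasDerivAt_cosh v).sub_const 1)).const_mul (Real.cos 1)).const_mul r
  have hg2 : deriv (deriv γ) = fun v => ![r * (Real.cos 1 * Real.sinh v), 0,
      r * (Real.cos 1 * Real.cosh v)] := by
    rw [hg1]
    refine deriv_vec3 _ _ _ _ _ _ (fun v => ?_) (fun v => ?_) (fun v => ?_)
    · exact ((Real.hasDerivAt_cosh v).const_mul (Real.cos 1)).const_mul r
    · exact hasDerivAt_const v _
    · exact ((Real.hasDerivAt_sinh v).const_mul (Real.cos 1)).const_mul r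
  have hg3 : deriv (deriv (deriv γ)) = fun v => ![r * (Real.cos 1 * Real.cosh v), 0,
      r * (Real.cos 1 * Real.sinh v)] := by
    rw [hg2]
    refine deriv_vec3 _ _ _ _ _ _ (fun v => ?_) (fun v => ?_) (fun v => ?_)
    · exact ((Real.hasDerivAt_sinh v).const_mul (Real.cos 1)).const_mul r
    · exact hasDerivAt_const v _
    · exact ((Real.hasDerivAt_cosh v).const_mul (Real.cos 1)).const_mul r
  have hch : ∀ v : ℝ, Real.cosh v ^ 2 - Real.sinh v ^ 2 = 1 := Real.cosh_sq_sub_sinh_sq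
  have hsc : Real.sin 1 ^ 2 + Real.cos 1 ^ 2 = 1 := Real.sin_sq_add_cos_sq 1
  -- speed of γ
  have hspeed : ∀ v : ℝ, mdot (deriv γ v) (deriv γ v) = r ^ 2 := by
    intro v
    rw [hg1]
    simp only [mdot, Matrix.cons_val_zero, Matrix.cons_val_one, Matrix.head_cons,
      Matrix.cons_val_two, Matrix.tail_cons]
    linear_combination (r ^ 2 * Real.cos 1 ^ 2) * hch v + r ^ 2 * hsc
  -- squared Minkowski norm of the cross product
  have hcrossdot : ∀ v : ℝ, mdot (lcross (deriv γ v) (deriv (deriv γ) v))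
      (lcross (deriv γ v) (deriv (deriv γ) v)) = (r ^ 2 * Real.cos 1) ^ 2 := by
    intro v
    rw [hg2, hg1]
    simp only [lcross, mdot, Matrix.cons_val_zero, Matrix.cons_val_one, Matrix.head_cons,
      Matrix.cons_val_two, Matrix.tail_cons]
    linear_combination (r ^ 4 * Real.cos 1 ^ 2 * Real.sin 1 ^ 2 +
        r ^ 4 * Real.cos 1 ^ 4 * (Real.cosh v ^ 2 - Real.sinh v ^ 2 + 1)) * hch v +
      (r ^ 4 * Real.cos 1 ^ 2) * hsc
  have hmnorm : ∀ v : ℝ, mnorm (lcross (deriv γ v) (deriv (deriv γ) v)) = r ^ 2 * Real.cos 1 := by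
    intro v
    rw [mnorm, hcrossdot v, abs_of_nonneg (by positivity), Real.sqrt_sq (by positivity)]
  refine ⟨?_, ?_, ?_, ?_, ?_, by positivity, ?_, ?_⟩
  · intro v
    rw [hfdef]
    simp only [mdot, Matrix.cons_val_zero, Matrix.cons_val_one, Matrix.head_cons,
      Matrix.cons_val_two, Matrix.tail_cons]
    linear_combination hch v
  · intro v
    rw [hf1]
    simp only [mdot, Matrix.cons_val_zero, Matrix.cons_val_one, Matrix.head_cons,
      Matrix.cons_val_two, Matrix.tail_cons]
    linear_combination -hch v
  · intro v
    rw [hf1, hfdef]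
    simp only [lcross, Matrix.cons_val_zero, Matrix.cons_val_one, Matrix.head_cons,
      Matrix.cons_val_two, Matrix.tail_cons]
    funext i
    fin_cases i <;> simp <;> linear_combination -hch v
  · intro v
    rw [hkg]
    simp only
    rw [hf2, hf1, hfdef]
    simp only [det3, Matrix.cons_val_zero, Matrix.cons_val_one, Matrix.head_cons,
      Matrix.cons_val_two, Matrix.tail_cons]
    ring
  · intro v; rw [hspeed v, hr2]
  · refine ⟨Real.cos 1 / r, by positivity, fun v => ?_⟩
    rw [hK]
    simp only
    rw [hmnorm v, hspeed v, Real.sqrt_sq hrpos.le]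
    field_simp
  · refine ⟨-(Real.sin 1) / r, ?_, fun v => ?_⟩
    · rw [div_ne_zero_iff]
      exact ⟨neg_ne_zero.mpr hsin.ne', hrpos.ne'⟩
    · rw [hT]
      simp only
      rw [hmnorm v, hg3, hg2, hg1]
      simp only [det3, Matrix.cons_val_zero, Matrix.cons_val_one, Matrix.head_cons,
        Matrix.cons_val_two, Matrix.tail_cons]
      rw [div_eq_div_iff (by positivity) hrpos.ne']
      linear_combination (-(r ^ 4) * Real.sin 1 * Real.cos 1 ^ 2) * hch v
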